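/- The Hankel operator H_E with symbol the indicator function of the right half of the unit circle satisfies ‖H_E‖ ≤ 1/2, since the function φ(z) = z̄(1_E(z) - 1/2) has ‖φ‖_∞ = 1/2 and φ̂(k) = 1̂_E(-1-k) for all k ≥ 0. -/

import Mathlib

open MeasureTheory Real AddCircle ContinuousLinearMap

open scoped ComplexConjugate

noncomputable section

local instance : Fact (0 < 2 * π) := ⟨Real.two_pi_pos⟩

/-- `L²` of the circle (with normalized Haar measure). -/
abbrev L2T := Lp ℂ 2 (@haarAddCircle (2 * π) _)

/-- The indicator function of the right half `E = {z ∈ 𝕋 : Re z > 0}` of the circle. -/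
def indE : AddCircle (2 * π) → ℂ :=
  Set.indicator {θ : AddCircle (2 * π) | 0 < (fourier 1 θ).re} fun _ => (1 : ℂ)

section Aux

local notation "μ2" => @haarAddCircle (2 * π) _

lemma measE : MeasurableSet {θ : AddCircle (2 * π) | 0 < (fourier 1 θ).re} :=
  (isOpen_lt continuous_const (Complex.continuous_re.comp (fourier 1).continuous)).measurableSet

lemma indE_meas : Measurable indE :=
  Measurable.indicator measurable_const measE

lemma norm_half : ‖(1/2 : ℂ)‖ = 1/2 := by
  rw [norm_div, norm_one]
  simp

lemma norm_indE_sub_half (θ : AddCircle (2 * π)) : ‖indE θ - 1 / 2‖ = 1 / 2 := by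
  rw [indE, Set.indicator_apply]
  split_ifs
  · rw [show (1 : ℂ) - 1/2 = 1/2 by ring, norm_half]
  · rw [zero_sub, norm_neg, norm_half]

lemma norm_two_indE_sub_one (θ : AddCircle (2 * π)) : ‖2 * indE θ - 1‖ = 1 := by
  rw [indE, Set.indicator_apply]
  split_ifs
  · rw [show (2:ℂ) * 1 - 1 = 1 by ring, norm_one]
  · rw [mul_zero, zero_sub, norm_neg, norm_one]

lemma norm_fourier_pt (n : ℤ) (θ : AddCircle (2 * π)) : ‖fourier n θ‖ = 1 := by
  rw [fourier_apply]; exact Circle.norm_coe _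

lemma fourier_apply_neg (n : ℤ) (t : AddCircle (2 * π)) : fourier n (-t) = fourier (-n) t := by
  rw [fourier_apply, smul_neg, fourier_neg', fourier_neg]

lemma indE_neg (θ : AddCircle (2 * π)) : indE (-θ) = indE θ := by
  unfold indE
  have h : (fourier 1 (-θ)).re = (fourier 1 θ).re := by
    rw [fourier_apply_neg, fourier_neg, Complex.conj_re]
  simp only [Set.indicator_apply, Set.mem_setOf_eq, h]

lemma indE_integrable : Integrable indE μ2 :=
  (integrable_const (1 : ℂ)).indicator measE

lemma coeff_sym (n : ℤ) : fourierCoeff indE (-n) = fourierCoeff indE n := by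
  unfold fourierCoeff
  rw [neg_neg]
  calc ∫ t, fourier n t • indE t ∂μ2
      = ∫ t, fourier n (-t) • indE (-t) ∂μ2 := (integral_neg_eq_self _ μ2).symm
    _ = ∫ t, fourier (-n) t • indE t ∂μ2 := by
        congr 1; funext t; rw [indE_neg, fourier_apply_neg]

lemma integral_fourier_eq_zero {n : ℤ} (hn : n ≠ 0) :
    ∫ t, fourier n t ∂μ2 = 0 :=
  integral_eq_zero_of_add_right_eq_neg (μ := μ2)
    (fourier_add_half_inv_index hn Real.two_pi_pos)

lemma le_of_sq_le_mul {a b : ℝ} (ha : 0 ≤ a) (hb : 0 ≤ b) (h : a ^ 2 ≤ b * a) : a ≤ b := by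
  rcases ha.eq_or_lt with h0 | h0
  · rw [← h0]; exact hb
  · exact le_of_mul_le_mul_right (by nlinarith) h0

end Aux

set_option maxHeartbeats 1000000 in
/-- The Hankel operator `H_E = (I - Π) M_{1_E} Π` with symbol the indicator of the right
half circle satisfies `‖H_E‖ ≤ 1/2`: indeed the function `ψ(z) = z̄ (1_E(z) - 1/2)` has
`‖ψ‖_∞ = 1/2` and `ψ̂(k) = 1̂_E(-1-k)` for all `k ≥ 0` (Nehari's theorem). -/
theorem norm_hankel_halfcircle_le_half
    (M : L2T →L[ℂ] L2T)
    (hM : ∀ f : L2T, (M f : AddCircle (2 * π) → ℂ) =ᵐ[haarAddCircle] fun θ => indE θ * f θ)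
    (P : L2T →L[ℂ] L2T)
    (hP_mem : ∀ f : L2T, ∀ p : ℤ, p < 0 → fourierCoeff (P f : AddCircle (2 * π) → ℂ) p = 0)
    (hP_fix : ∀ f : L2T, (∀ p : ℤ, p < 0 → fourierCoeff (f : AddCircle (2 * π) → ℂ) p = 0) →
      P f = f)
    (hP_sa : ∀ f g : L2T, inner (𝕜 := ℂ) (P f) g = inner (𝕜 := ℂ) f (P g)) :
    ‖(ContinuousLinearMap.id ℂ L2T - P) ∘L M ∘L P‖ ≤ 1 / 2 ∧
      eLpNorm (fun θ => conj (fourier 1 θ) * (indE θ - 1 / 2)) ⊤ haarAddCircle = 1 / 2 ∧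
      ∀ k : ℤ, 0 ≤ k →
        fourierCoeff (fun θ => conj (fourier 1 θ) * (indE θ - 1 / 2)) k =
          fourierCoeff indE (-1 - k) := by
  refine ⟨?_, ?_, ?_⟩
  · -- operator norm bound
    have hPP : ∀ f : L2T, P (P f) = P f := fun f => hP_fix (P f) (hP_mem f)
    have orth : ∀ f g : L2T, inner (𝕜 := ℂ) (P f) (g - P g) = 0 := by
      intro f g
      have h := hP_sa (P f) g
      rw [hPP] at h
      rw [inner_sub_right, h, sub_self]
    have normP : ∀ f : L2T, ‖P f‖ ≤ ‖f‖ := by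
      intro f
      have h0 : inner (𝕜 := ℂ) (P f) (P f) = inner (𝕜 := ℂ) f (P f) := by
        rw [hP_sa f (P f), hPP]
      have h1 : ‖P f‖ ^ 2 ≤ ‖f‖ * ‖P f‖ := by
        calc ‖P f‖ ^ 2 = RCLike.re (inner (𝕜 := ℂ) (P f) (P f)) := (inner_self_eq_norm_sq _).symm
          _ = RCLike.re (inner (𝕜 := ℂ) f (P f)) := by rw [h0]
          _ ≤ ‖inner (𝕜 := ℂ) f (P f)‖ := RCLike.re_le_norm _
          _ ≤ ‖f‖ * ‖P f‖ := norm_inner_le_norm _ _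
      exact le_of_sq_le_mul (norm_nonneg _) (norm_nonneg _) h1
    have normIP : ∀ g : L2T, ‖g - P g‖ ≤ ‖g‖ := by
      intro g
      have h0 : inner (𝕜 := ℂ) (g - P g) (g - P g) = inner (𝕜 := ℂ) g (g - P g) := by
        rw [inner_sub_left, orth g g, sub_zero]
      have h1 : ‖g - P g‖ ^ 2 ≤ ‖g‖ * ‖g - P g‖ := by
        calc ‖g - P g‖ ^ 2 = RCLike.re (inner (𝕜 := ℂ) (g - P g) (g - P g)) :=
              (inner_self_eq_norm_sq _).symm
          _ = RCLike.re (inner (𝕜 := ℂ) g (g - P g)) := by rw [h0]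
          _ ≤ ‖inner (𝕜 := ℂ) g (g - P g)‖ := RCLike.re_le_norm _
          _ ≤ ‖g‖ * ‖g - P g‖ := norm_inner_le_norm _ _
      exact le_of_sq_le_mul (norm_nonneg _) (norm_nonneg _) h1
    have normW : ∀ u : L2T, ‖(2:ℂ) • M u - u‖ = ‖u‖ := by
      intro u
      have hcoe : ((2:ℂ) • M u - u : L2T) =ᵐ[haarAddCircle]
          fun θ => (2 * indE θ - 1) * (u : AddCircle (2*π) → ℂ) θ := by
        filter_upwards [Lp.coeFn_sub ((2:ℂ) • M u) u, Lp.coeFn_smul (2:ℂ) (M u), hM u]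
          with θ h1 h2 h3
        rw [h1, Pi.sub_apply, h2, Pi.smul_apply, h3]
        simp only [smul_eq_mul]
        ring
      rw [Lp.norm_def, Lp.norm_def, eLpNorm_congr_ae hcoe]
      congr 1
      refine eLpNorm_congr_norm_ae (Filter.Eventually.of_forall fun θ => ?_)
      rw [norm_mul, norm_two_indE_sub_one, one_mul]
    refine ContinuousLinearMap.opNorm_le_bound _ (by norm_num) (fun f => ?_)
    set x := ((ContinuousLinearMap.id ℂ L2T - P) ∘L M ∘L P) f with hx
    have hx2 : x = M (P f) - P (M (P f)) := by
      rw [hx]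
      simp [ContinuousLinearMap.comp_apply, ContinuousLinearMap.sub_apply]
    have key : inner (𝕜 := ℂ) x x =
        (1/2 : ℂ) * inner (𝕜 := ℂ) ((2:ℂ) • M (P f) - P f) (x - P x) := by
      have e1 : inner (𝕜 := ℂ) x x = inner (𝕜 := ℂ) (M (P f)) (x - P x) := by
        nth_rewrite 1 [hx2]
        rw [inner_sub_left, hP_sa (M (P f)) x, ← inner_sub_right]
      have e2 : inner (𝕜 := ℂ) (P f) (x - P x) = 0 := orth f x
      rw [e1, inner_sub_left, inner_smul_left, e2]
      simp only [map_ofNat, sub_zero]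
      ring
    have h1 : ‖x‖ ^ 2 ≤ (1/2 * ‖f‖) * ‖x‖ := by
      calc ‖x‖ ^ 2 = RCLike.re (inner (𝕜 := ℂ) x x) := (inner_self_eq_norm_sq _).symm
        _ ≤ ‖inner (𝕜 := ℂ) x x‖ := RCLike.re_le_norm _
        _ = ‖(1/2 : ℂ)‖ * ‖inner (𝕜 := ℂ) ((2:ℂ) • M (P f) - P f) (x - P x)‖ := by
            rw [key, norm_mul]
        _ ≤ 1/2 * (‖(2:ℂ) • M (P f) - P f‖ * ‖x - P x‖) := by
            rw [norm_half]
            exact mul_le_mul_of_nonneg_left (norm_inner_le_norm _ _) (by norm_num)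
        _ = 1/2 * (‖P f‖ * ‖x - P x‖) := by rw [normW (P f)]
        _ ≤ (1/2 * ‖f‖) * ‖x‖ := by
            have hp := normP f
            have hq := normIP x
            have := norm_nonneg (P f)
            have := norm_nonneg (x - P x)
            nlinarith
    have := le_of_sq_le_mul (norm_nonneg x) (by positivity) h1
    linarith
  · -- sup norm of ψ
    have hψ : ∀ θ : AddCircle (2 * π), ‖conj (fourier 1 θ) * (indE θ - 1 / 2)‖ = 1 / 2 := by
      intro θ
      rw [norm_mul, RCLike.norm_conj, norm_fourier_pt, one_mul, norm_indE_sub_half]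
    rw [eLpNorm_exponent_top, eLpNormEssSup]
    have h2 : (fun θ : AddCircle (2 * π) =>
        (‖conj (fourier 1 θ) * (indE θ - 1 / 2)‖ₑ : ENNReal)) = fun _ => (1/2 : ENNReal) := by
      funext θ
      rw [← ofReal_norm, hψ θ, ENNReal.ofReal_div_of_pos two_pos,
        ENNReal.ofReal_one, ENNReal.ofReal_ofNat]
    rw [h2, essSup_const _ (NeZero.ne _)]
  · -- Fourier coefficients of ψ
    intro k hk
    have hk1 : (-(k+1) : ℤ) ≠ 0 := by omega
    have hpt : ∀ θ : AddCircle (2 * π), fourier (-k) θ • (conj (fourier 1 θ) * (indE θ - 1/2)) =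
        fourier (-(k+1)) θ * indE θ - (1/2 : ℂ) * fourier (-(k+1)) θ := by
      intro θ
      rw [smul_eq_mul, ← fourier_neg (n := 1), show (-(k+1) : ℤ) = -k + -1 by ring, fourier_add]
      ring
    have hA : Integrable (fun θ => fourier (-(k+1)) θ * indE θ) haarAddCircle :=
      indE_integrable.bdd_mul (fourier _).continuous.aestronglyMeasurable
        (c := 1) (Filter.Eventually.of_forall fun θ => le_of_eq (norm_fourier_pt _ θ))
    have hB : Integrable (fun θ => (1/2 : ℂ) * fourier (-(k+1)) θ) haarAddCircle :=
      ((fourier (-(k+1)) : C(AddCircle (2*π), ℂ)).continuous.integrable_of_hasCompactSupport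
        (HasCompactSupport.of_compactSpace _)).const_mul _
    calc fourierCoeff (fun θ => conj (fourier 1 θ) * (indE θ - 1 / 2)) k
        = ∫ θ, (fourier (-(k+1)) θ * indE θ - (1/2 : ℂ) * fourier (-(k+1)) θ) ∂haarAddCircle := by
          rw [fourierCoeff]; exact integral_congr_ae (Filter.Eventually.of_forall hpt)
      _ = (∫ θ, fourier (-(k+1)) θ * indE θ ∂haarAddCircle)
            - ∫ θ, (1/2 : ℂ) * fourier (-(k+1)) θ ∂haarAddCircle := integral_sub hA hB
      _ = fourierCoeff indE (k+1)
            - (1/2 : ℂ) * ∫ θ : AddCircle (2*π), fourier (-(k+1)) θ ∂haarAddCircle := by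
          simp only [fourierCoeff, smul_eq_mul, integral_const_mul]
      _ = fourierCoeff indE (k+1) := by
          rw [integral_fourier_eq_zero hk1, mul_zero, sub_zero]
      _ = fourierCoeff indE (-1 - k) := by
          rw [show (-1 - k : ℤ) = -(k+1) by ring, coeff_sym]
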